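/- arXiv:2402.14760 — 2 statements merged into one kernel-verified Lean document; each statement's English description precedes it below -/
import Mathlib

section
/- Let θ range over ℝ^d and φ over ℝ^p, and let D ∈ ℕ, α > 0, β > 0. Suppose the inner loop performs SGD updates θ_{k,t+1} = θ_{k,t} − α ∇_θ ℓ_FT(φ_k, θ_{k,t}; z_{k,t}) for t = 0,…,D−1, where the initialization θ_{k,0} does not depend on φ_k (so ∂θ_{k,0}/∂φ_k = 0), and all maps are twice continuously differentiable. Then for the outer-loop preference sample (x_k, y_k, y'_k), the gradient of ℓ_PL(φ_k, θ_{k,D}) with respect to φ_k equals −(α/β) · ∇_θ A_k · (1 − σ(A_k)) · Σ_{t=0}^{D−1} ∇_φ H_{k,t} ∇_θ^⊤ F_{k,t} R_{k,t} ∏_{j=t+1}^{D−1} (I + α ∇_θ² F_{k,j} R_{k,j}), where A_k = log π_{θ_{k,D}}(y_k|x_k) − log π_{θ_{k,D}}(y'_k|x_k), R_{k,t} = exp(r_{φ_k}(x_{k,t}, y_{k,t})/β), F_{k,t} = log π_{θ_{k,t}}(y_{k,t}|x_{k,t}), and H_{k,t} = r_{φ_k}(x_{k,t}, y_{k,t}).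 -/
open scoped RealInnerProductSpace BigOperators

/-- The logistic function `σ(t) = 1/(1+e^{-t})`. -/
noncomputable def logisticFn (t : ℝ) : ℝ := 1 / (1 + Real.exp (-t))

section Aux

lemma neglog_logistic_hasDerivAt (a : ℝ) :
    HasDerivAt (fun t => -Real.log (logisticFn t)) (-(1 - logisticFn a)) a := by
  have hrw : (fun t => -Real.log (logisticFn t))
      = fun t => -Real.log ((1 + Real.exp (-t))⁻¹) := by
    funext t; rw [logisticFn, one_div]
  rw [hrw]
  have he : HasDerivAt (fun t : ℝ => Real.exp (-t)) (Real.exp (-a) * (-1)) a :=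
    ((hasDerivAt_id a).neg).exp
  have hd : HasDerivAt (fun t : ℝ => 1 + Real.exp (-t)) (Real.exp (-a) * (-1)) a :=
    he.const_add 1
  have hpos : (0:ℝ) < 1 + Real.exp (-a) := by positivity
  have hne : (1 + Real.exp (-a)) ≠ 0 := hpos.ne'
  have hinv := hd.inv hne
  have hlog := hinv.log (inv_ne_zero hne)
  have hfin := hlog.neg
  refine hfin.congr_deriv ?_
  have h1 : logisticFn a = (1 + Real.exp (-a))⁻¹ := by rw [logisticFn, one_div]
  rw [h1, Pi.inv_apply]
  field_simp
  ring

variable {E : Type*} [NormedAddCommGroup E] [InnerProductSpace ℝ E] [CompleteSpace E]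

lemma gradient_mul_const (f : E → ℝ) (x : E) (hf : DifferentiableAt ℝ f x) (c : ℝ) :
    gradient (fun y => f y * c) x = c • gradient f x := by
  unfold gradient
  rw [fderiv_mul_const hf, map_smulₛₗ]
  simp

lemma hessian_selfadj (f : E → ℝ) (hf : ContDiff ℝ 2 f) (s v w : E) :
    ⟪fderiv ℝ (fun x => gradient f x) s v, w⟫ = ⟪v, fderiv ℝ (fun x => gradient f x) s w⟫ := by
  have hfd : ∀ y, HasFDerivAt f (fderiv ℝ f y) y :=
    fun y => (hf.differentiable (by norm_num) y).hasFDerivAt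
  have hC1 : ContDiff ℝ 1 (fderiv ℝ f) := hf.fderiv_right (by norm_num)
  have hsnd : HasFDerivAt (fderiv ℝ f) (fderiv ℝ (fderiv ℝ f) s) s :=
    (hC1.differentiable (by norm_num) s).hasFDerivAt
  set B := fderiv ℝ (fderiv ℝ f) s with hB
  have hsymm : ∀ v w : E, B v w = B w v := second_derivative_symmetric hfd hsnd
  set T : StrongDual ℝ E →L[ℝ] E :=
    ((InnerProductSpace.toDual ℝ E).symm :
      StrongDual ℝ E ≃ₗᵢ[ℝ] E).toContinuousLinearEquiv.toContinuousLinearMap with hT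
  have hg : HasFDerivAt (fun x => gradient f x) (T.comp B) s := T.hasFDerivAt.comp s hsnd
  have hfd2 : fderiv ℝ (fun x => gradient f x) s = T.comp B := hg.fderiv
  rw [hfd2]
  have hTa : ∀ (y : StrongDual ℝ E) (u : E), ⟪T y, u⟫ = y u := by
    intro y u
    exact InnerProductSpace.toDual_symm_apply
  simp only [ContinuousLinearMap.comp_apply]
  rw [hTa, real_inner_comm, hTa, hsymm]

lemma gradient_contDiff_one (f : E → ℝ) (hf : ContDiff ℝ 2 f) :
    ContDiff ℝ 1 (fun x => gradient f x) := by
  have h1 : ContDiff ℝ 1 (fderiv ℝ f) := hf.fderiv_right (by norm_num)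
  exact (((InnerProductSpace.toDual ℝ E).symm :
    StrongDual ℝ E ≃ₗᵢ[ℝ] E).toContinuousLinearEquiv.toContinuousLinearMap).contDiff.comp h1

lemma selfadj_list_prod
    (l : List (E →L[ℝ] E)) (hl : ∀ f ∈ l, ∀ u w : E, ⟪f u, w⟫ = ⟪u, f w⟫) :
    ∀ u w : E, ⟪l.prod u, w⟫ = ⟪u, l.reverse.prod w⟫ := by
  induction l with
  | nil => simp
  | cons a l ih =>
    intro u w
    have ha := hl a (by simp)
    have ih' := ih (fun f hf => hl f (by simp [hf]))
    simp only [List.prod_cons, List.reverse_cons, List.prod_append, List.prod_cons,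
      List.prod_nil, mul_one, ContinuousLinearMap.mul_apply]
    rw [ha, ih']

noncomputable def Lrec {P E : Type*} [NormedAddCommGroup P] [NormedSpace ℝ P]
    [NormedAddCommGroup E] [NormedSpace ℝ E]
    (M : ℕ → E →L[ℝ] E) (N : ℕ → P →L[ℝ] E) : ℕ → (P →L[ℝ] E)
  | 0 => 0
  | (t+1) => (M t).comp (Lrec M N t) + N t

lemma Lrec_apply {P E : Type*} [NormedAddCommGroup P] [NormedSpace ℝ P]
    [NormedAddCommGroup E] [NormedSpace ℝ E]
    (M : ℕ → E →L[ℝ] E) (N : ℕ → P →L[ℝ] E) (n : ℕ) (v : P) :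
    Lrec M N n v = ∑ t ∈ Finset.range n,
      (((List.Ico (t+1) n).map M).reverse.prod) (N t v) := by
  induction n with
  | zero => simp [Lrec]
  | succ n ih =>
    rw [Finset.sum_range_succ]
    rw [List.Ico.self_empty]
    simp only [List.map_nil, List.reverse_nil, List.prod_nil, ContinuousLinearMap.one_apply]
    have h2 : ∀ t ∈ Finset.range n,
        (((List.Ico (t+1) (n+1)).map M).reverse.prod) (N t v)
          = M n ((((List.Ico (t+1) n).map M).reverse.prod) (N t v)) := by
      intro t ht
      have htn : t + 1 ≤ n := Finset.mem_range.mp ht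
      rw [List.Ico.succ_top htn]
      simp [ContinuousLinearMap.mul_apply]
    rw [Finset.sum_congr rfl h2]
    show (M n).comp (Lrec M N n) v + N n v = _
    rw [ContinuousLinearMap.comp_apply, ih, map_sum]

end Aux

/-- Proposition 1: analytical form of the hypergradient.
The inner loop performs the SGD updates
`θ_{k,t+1} = θ_{k,t} - α ∇_θ ℓ_FT(φ_k, θ_{k,t}; z_{k,t})` for `t = 0,…,D-1`, where
`ℓ_FT(φ,θ;z) = -log π_θ(y|x) · exp(r_φ(x,y)/β)`, the initialization `θ_{k,0} = θ0` does
not depend on `φ_k`, and all maps are twice continuously differentiable.  Then for the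
outer preference sample `(x_k, y_k, y'_k)` (with `fy θ = log π_θ(y_k|x_k)` and
`fy' θ = log π_θ(y'_k|x_k)`), the gradient of
`ℓ_PL(φ_k, θ_{k,D}) = -log σ(log π_{θ_{k,D}}(y_k|x_k) - log π_{θ_{k,D}}(y'_k|x_k))`
with respect to `φ_k` equals
`-(α/β) ∇_θA_k (1-σ(A_k)) Σ_{t<D} ∇_φH_{k,t} ∇_θ^⊤F_{k,t} R_{k,t}
  ∏_{j=t+1}^{D-1} (I + α ∇_θ²F_{k,j} R_{k,j})`,
where `A_k = log π_{θ_{k,D}}(y_k|x_k) - log π_{θ_{k,D}}(y'_k|x_k)`,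
`R_{k,t} = exp(r_{φ_k}(x_{k,t},y_{k,t})/β)`, `F_{k,t} = log π_{θ_{k,t}}(y_{k,t}|x_{k,t})`,
`H_{k,t} = r_{φ_k}(x_{k,t},y_{k,t})`.  The `p×d` matrix
`∇_φH ∇_θ^⊤F R ∏(I+α∇²F R)` is applied to the vector `∇_θA_k (1-σ(A_k))` as
`R ⟪∇_θF, (∏(I+α∇²F R)) ∇_θA⟫ • ∇_φH`. -/
theorem hypergradient_formula {d p : ℕ} {Z : Type*}
    (logπ : EuclideanSpace ℝ (Fin d) → Z → ℝ)
    (r : EuclideanSpace ℝ (Fin p) → Z → ℝ)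
    (fy fy' : EuclideanSpace ℝ (Fin d) → ℝ)
    (α β : ℝ) (hα : 0 < α) (hβ : 0 < β)
    (D : ℕ) (z : ℕ → Z)
    (θ0 : EuclideanSpace ℝ (Fin d))
    (ℓFT : EuclideanSpace ℝ (Fin p) → EuclideanSpace ℝ (Fin d) → Z → ℝ)
    (hℓFT : ∀ φ θ zz, ℓFT φ θ zz = -(logπ θ zz) * Real.exp (r φ zz / β))
    (traj : EuclideanSpace ℝ (Fin p) → ℕ → EuclideanSpace ℝ (Fin d))
    (htraj0 : ∀ φ, traj φ 0 = θ0)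
    (htrajstep : ∀ φ t, t < D →
      traj φ (t + 1) = traj φ t - α • gradient (fun s => ℓFT φ s (z t)) (traj φ t))
    (hC2logπ : ∀ zz, ContDiff ℝ 2 fun s => logπ s zz)
    (hC2r : ∀ zz, ContDiff ℝ 2 fun q => r q zz)
    (hC2fy : ContDiff ℝ 2 fy) (hC2fy' : ContDiff ℝ 2 fy')
    (φk : EuclideanSpace ℝ (Fin p)) :
    gradient (fun q => -Real.log (logisticFn (fy (traj q D) - fy' (traj q D)))) φk
      = (-(α / β) * (1 - logisticFn (fy (traj φk D) - fy' (traj φk D)))) •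
          ∑ t ∈ Finset.range D,
            (Real.exp (r φk (z t) / β) *
                ⟪gradient (fun s => logπ s (z t)) (traj φk t),
                  ((List.Ico (t + 1) D).map (fun j =>
                        ContinuousLinearMap.id ℝ (EuclideanSpace ℝ (Fin d)) +
                          (α * Real.exp (r φk (z j) / β)) •
                            fderiv ℝ (fun s => gradient (fun u => logπ u (z j)) s)
                              (traj φk j))).prod
                    (gradient (fun s => fy s - fy' s) (traj φk D))⟫) •
              gradient (fun q => r q (z t)) φk := by
  have hdiff_logπ : ∀ zz, Differentiable ℝ (fun s => logπ s zz) :=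
    fun zz => (hC2logπ zz).differentiable (by norm_num)
  have hdiff_r : ∀ zz, Differentiable ℝ (fun q => r q zz) :=
    fun zz => (hC2r zz).differentiable (by norm_num)
  set M : ℕ → EuclideanSpace ℝ (Fin d) →L[ℝ] EuclideanSpace ℝ (Fin d) :=
    fun j => ContinuousLinearMap.id ℝ (EuclideanSpace ℝ (Fin d)) +
      (α * Real.exp (r φk (z j) / β)) •
        fderiv ℝ (fun s => gradient (fun u => logπ u (z j)) s) (traj φk j) with hMdef
  set N : ℕ → EuclideanSpace ℝ (Fin p) →L[ℝ] EuclideanSpace ℝ (Fin d) :=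
    fun t => ((α * Real.exp (r φk (z t) / β)) / β) •
      ((innerSL ℝ (gradient (fun q => r q (z t)) φk)).smulRight
        (gradient (fun u => logπ u (z t)) (traj φk t))) with hNdef
  -- rewritten SGD step
  have hstep' : ∀ φ t, t < D → traj φ (t+1)
      = traj φ t + (α * Real.exp (r φ (z t) / β)) •
          gradient (fun u => logπ u (z t)) (traj φ t) := by
    intro φ t ht
    rw [htrajstep φ t ht]
    have h1 : (fun s => ℓFT φ s (z t))
        = fun s => logπ s (z t) * (-Real.exp (r φ (z t) / β)) := by
      funext s; rw [hℓFT]; ring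
    rw [h1, gradient_mul_const _ _ (hdiff_logπ (z t) (traj φ t))]
    module
  have hGC1 : ∀ t, ContDiff ℝ 1 (fun s => gradient (fun u => logπ u (z t)) s) :=
    fun t => gradient_contDiff_one _ (hC2logπ (z t))
  -- derivative of the trajectory
  have key : ∀ n, n ≤ D → HasFDerivAt (fun φ => traj φ n) (Lrec M N n) φk := by
    intro n
    induction n with
    | zero =>
      intro _
      have h0 : (fun φ : EuclideanSpace ℝ (Fin p) => traj φ 0) = fun _ => θ0 :=
        funext htraj0
      rw [h0]
      show HasFDerivAt _ (Lrec M N 0) φk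
      rw [show Lrec M N 0 = 0 from rfl]
      exact hasFDerivAt_const θ0 φk
    | succ t ih =>
      intro hlt
      have ht : t < D := Nat.lt_of_succ_le hlt
      have hL := ih (le_of_lt ht)
      have hrw : (fun φ => traj φ (t+1))
          = fun φ => traj φ t + (α * Real.exp (r φ (z t) / β)) •
              gradient (fun u => logπ u (z t)) (traj φ t) :=
        funext fun φ => hstep' φ t ht
      rw [hrw]
      have hr : HasFDerivAt (fun φ => r φ (z t))
          (InnerProductSpace.toDual ℝ _ (gradient (fun q => r q (z t)) φk)) φk :=
        ((hdiff_r (z t) φk).hasGradientAt).hasFDerivAt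
      have hrd : HasFDerivAt (fun φ => r φ (z t) / β)
          (β⁻¹ • InnerProductSpace.toDual ℝ _ (gradient (fun q => r q (z t)) φk)) φk := by
        simpa [div_eq_mul_inv, smul_smul, mul_comm] using hr.mul_const β⁻¹
      have hc := (hrd.exp).const_mul α
      have hGd : HasFDerivAt (fun s => gradient (fun u => logπ u (z t)) s)
          (fderiv ℝ (fun s => gradient (fun u => logπ u (z t)) s) (traj φk t))
          (traj φk t) :=
        (((hGC1 t).differentiable (by norm_num)) (traj φk t)).hasFDerivAt
      have hcomp := hGd.comp φk hL
      have hadd := hL.add (hc.smul hcomp)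
      refine hadd.congr_fderiv (Eq.symm ?_)
      show (M t).comp (Lrec M N t) + N t = _
      refine ContinuousLinearMap.ext fun v => ?_
      simp only [ContinuousLinearMap.add_apply, ContinuousLinearMap.comp_apply,
        ContinuousLinearMap.smul_apply, ContinuousLinearMap.smulRight_apply,
        ContinuousLinearMap.id_apply, hMdef, hNdef, innerSL_apply_apply,
        InnerProductSpace.toDual_apply_apply, smul_eq_mul, Function.comp_apply, Function.comp]
      rw [smul_smul]
      module
  -- outer derivative
  have hAdiff : DifferentiableAt ℝ (fun s => fy s - fy' s) (traj φk D) :=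
    ((hC2fy.differentiable (by norm_num) (traj φk D)).sub
      (hC2fy'.differentiable (by norm_num) (traj φk D)))
  have hA : HasFDerivAt (fun s => fy s - fy' s)
      (InnerProductSpace.toDual ℝ _ (gradient (fun s => fy s - fy' s) (traj φk D)))
      (traj φk D) := hAdiff.hasGradientAt.hasFDerivAt
  have hTD := key D le_rfl
  have hU : HasFDerivAt (fun φ => fy (traj φ D) - fy' (traj φ D))
      ((InnerProductSpace.toDual ℝ _
        (gradient (fun s => fy s - fy' s) (traj φk D))).comp (Lrec M N D)) φk :=
    by have := hA.comp φk hTD; exact this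
  have hout : HasFDerivAt
      (fun q => -Real.log (logisticFn (fy (traj q D) - fy' (traj q D))))
      ((-(1 - logisticFn (fy (traj φk D) - fy' (traj φk D)))) •
        ((InnerProductSpace.toDual ℝ _
          (gradient (fun s => fy s - fy' s) (traj φk D))).comp (Lrec M N D))) φk :=
    (neglog_logistic_hasDerivAt _).comp_hasFDerivAt φk hU
  -- self-adjointness of the M's
  have hMsa : ∀ j, ∀ u w : EuclideanSpace ℝ (Fin d), ⟪M j u, w⟫ = ⟪u, M j w⟫ := by
    intro j u w
    simp only [hMdef, ContinuousLinearMap.add_apply, ContinuousLinearMap.id_apply,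
      ContinuousLinearMap.smul_apply, inner_add_left, inner_add_right,
      real_inner_smul_left, real_inner_smul_right]
    rw [hessian_selfadj _ (hC2logπ (z j)) (traj φk j) u w]
  -- finish
  have hX : (-(1 - logisticFn (fy (traj φk D) - fy' (traj φk D)))) •
        ((InnerProductSpace.toDual ℝ _
          (gradient (fun s => fy s - fy' s) (traj φk D))).comp (Lrec M N D))
      = InnerProductSpace.toDual ℝ (EuclideanSpace ℝ (Fin p))
          ((-(α / β) * (1 - logisticFn (fy (traj φk D) - fy' (traj φk D)))) •
          ∑ t ∈ Finset.range D,
            (Real.exp (r φk (z t) / β) *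
                ⟪gradient (fun s => logπ s (z t)) (traj φk t),
                  ((List.Ico (t + 1) D).map M).prod
                    (gradient (fun s => fy s - fy' s) (traj φk D))⟫) •
              gradient (fun q => r q (z t)) φk) := by
    ext v
    simp only [InnerProductSpace.toDual_apply_apply, ContinuousLinearMap.smul_apply,
      ContinuousLinearMap.comp_apply, smul_eq_mul]
    rw [Lrec_apply]
    rw [inner_sum]
    rw [Finset.mul_sum]
    rw [real_inner_smul_left]
    simp only [sum_inner]
    rw [Finset.mul_sum]
    refine Finset.sum_congr rfl ?_
    intro t ht
    have hsa := selfadj_list_prod ((List.Ico (t+1) D).map M)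
      (by
        intro f hf u w
        obtain ⟨j, hj, rfl⟩ := List.mem_map.mp hf
        exact hMsa j u w)
      (gradient (fun s => fy s - fy' s) (traj φk D)) (N t v)
    rw [← hsa]
    simp only [hNdef, ContinuousLinearMap.smul_apply, ContinuousLinearMap.smulRight_apply,
      innerSL_apply_apply, real_inner_smul_right, real_inner_smul_left, smul_eq_mul]
    rw [real_inner_comm (gradient (fun s => logπ s (z t)) (traj φk t))]
    ring
  rw [gradient, hout.fderiv, hX, LinearIsometryEquiv.symm_apply_apply]
end

section
/- Under the assumptions below, for every preference sample ν = (x,y,y'), every φ, and all θ, θ': ‖∇_θ ℓ_PL(φ,θ;ν) − ∇_θ ℓ_PL(φ,θ';ν)‖ ≤ (2L + M²) ‖θ − θ'‖, where ∇_θ ℓ_PL(φ,θ;ν) = −σ(log π_θ(y'|x) − log π_θ(y|x)) · (∇_θ log π_θ(y|x) − ∇_θ log π_θ(y'|x)). -/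
open scoped RealInnerProductSpace BigOperators

lemma logistic_hasDerivAt (t : ℝ) :
    HasDerivAt logisticFn (Real.exp (-t) / (1 + Real.exp (-t))^2) t := by
  have h1 : HasDerivAt (fun t : ℝ => 1 + Real.exp (-t)) (-Real.exp (-t)) t := by
    simpa using (HasDerivAt.const_add 1 ((Real.hasDerivAt_exp (-t)).comp t ((hasDerivAt_id t).neg)))
  have hne : (1 + Real.exp (-t)) ≠ 0 := by positivity
  have := h1.inv hne
  have heq : logisticFn = fun t : ℝ => (1 + Real.exp (-t))⁻¹ := by
    funext x; simp [logisticFn, one_div]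
  rw [heq]
  exact this.congr_deriv (by ring)

lemma logistic_bounds (t : ℝ) : 0 ≤ logisticFn t ∧ logisticFn t ≤ 1 := by
  unfold logisticFn
  have h := Real.exp_pos (-t)
  constructor
  · positivity
  · rw [div_le_one (by positivity)]; linarith

lemma logistic_lip (s t : ℝ) : |logisticFn s - logisticFn t| ≤ (1/4) * |s - t| := by
  have hd : ∀ x ∈ Set.univ, HasDerivWithinAt logisticFn
      (Real.exp (-x) / (1 + Real.exp (-x))^2) Set.univ x :=
    fun x _ => (logistic_hasDerivAt x).hasDerivWithinAt
  have hb : ∀ x ∈ Set.univ, ‖Real.exp (-x) / (1 + Real.exp (-x))^2‖ ≤ (1/4 : ℝ) := by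
    intro x _
    have h := Real.exp_pos (-x)
    rw [Real.norm_eq_abs, abs_of_nonneg (by positivity), div_le_iff₀ (by positivity)]
    nlinarith [sq_nonneg (1 - Real.exp (-x))]
  have := convex_univ.norm_image_sub_le_of_norm_hasDerivWithin_le hd hb
    (Set.mem_univ t) (Set.mem_univ s)
  simpa [Real.norm_eq_abs] using this

lemma norm_gradient_le {d : ℕ} {f : EuclideanSpace ℝ (Fin d) → ℝ} {M : ℝ}
    (hf : Differentiable ℝ f) (hM : 0 ≤ M)
    (hlip : ∀ θ θ' : EuclideanSpace ℝ (Fin d), |f θ - f θ'| ≤ M * ‖θ - θ'‖)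
    (x : EuclideanSpace ℝ (Fin d)) : ‖gradient f x‖ ≤ M := by
  have h1 : ‖gradient f x‖ = ‖fderiv ℝ f x‖ := by
    rw [gradient]
    exact LinearIsometryEquiv.norm_map _ _
  rw [h1]
  refine (hf x).hasFDerivAt.le_of_lip' hM ?_
  exact Filter.Eventually.of_forall fun y => by
    simpa [Real.norm_eq_abs] using hlip y x

/-- the gradient in `θ` of the preference loss
`ℓ_PL(φ,θ;ν) = -log σ(log π_θ(y|x) - log π_θ(y'|x))`, given by
`∇_θ ℓ_PL = -σ(log π_θ(y'|x) - log π_θ(y|x)) • (∇_θ log π_θ(y|x) - ∇_θ log π_θ(y'|x))`,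
is `(2L + M²)`-Lipschitz in `θ`, provided for every pair `(x,y)` the map
`θ ↦ log π_θ(y|x)` is `M`-Lipschitz and `θ ↦ ∇_θ log π_θ(y|x)` is `L`-Lipschitz.
Here `V` is the type of preference samples `ν = (x,y,y')`, and `fy θ ν`, `fy' θ ν` denote
`log π_θ(y|x)` and `log π_θ(y'|x)` respectively. -/
theorem pl_gradient_lipschitz {d : ℕ} {V : Type*}
    (fy fy' : EuclideanSpace ℝ (Fin d) → V → ℝ) (M L : ℝ)
    (hdfy : ∀ ν : V, Differentiable ℝ fun θ => fy θ ν)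
    (hdfy' : ∀ ν : V, Differentiable ℝ fun θ => fy' θ ν)
    (hMfy : ∀ (ν : V) (θ θ' : EuclideanSpace ℝ (Fin d)),
      |fy θ ν - fy θ' ν| ≤ M * ‖θ - θ'‖)
    (hMfy' : ∀ (ν : V) (θ θ' : EuclideanSpace ℝ (Fin d)),
      |fy' θ ν - fy' θ' ν| ≤ M * ‖θ - θ'‖)
    (hLfy : ∀ (ν : V) (θ θ' : EuclideanSpace ℝ (Fin d)),
      ‖gradient (fun s => fy s ν) θ - gradient (fun s => fy s ν) θ'‖ ≤ L * ‖θ - θ'‖)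
    (hLfy' : ∀ (ν : V) (θ θ' : EuclideanSpace ℝ (Fin d)),
      ‖gradient (fun s => fy' s ν) θ - gradient (fun s => fy' s ν) θ'‖ ≤ L * ‖θ - θ'‖) :
    ∀ (ν : V) (θ θ' : EuclideanSpace ℝ (Fin d)),
      ‖(-(logisticFn (fy' θ ν - fy θ ν))) •
            (gradient (fun s => fy s ν) θ - gradient (fun s => fy' s ν) θ) -
          (-(logisticFn (fy' θ' ν - fy θ' ν))) •
            (gradient (fun s => fy s ν) θ' - gradient (fun s => fy' s ν) θ')‖
        ≤ (2 * L + M ^ 2) * ‖θ - θ'‖ := by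
  intro ν θ θ'
  by_cases hθ : θ = θ'
  · subst hθ; simp
  have hpos : 0 < ‖θ - θ'‖ := by
    rw [norm_pos_iff]; exact sub_ne_zero.2 hθ
  have hM0 : 0 ≤ M := by
    have h := (abs_nonneg _).trans (hMfy ν θ θ')
    nlinarith
  have hL0 : 0 ≤ L := by
    have h := (norm_nonneg _).trans (hLfy ν θ θ')
    nlinarith
  set A := gradient (fun s => fy s ν) with hA
  set B := gradient (fun s => fy' s ν) with hB
  set a := logisticFn (fy' θ ν - fy θ ν) with ha
  set b := logisticFn (fy' θ' ν - fy θ' ν) with hb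
  set u := A θ - B θ with hu
  set v := A θ' - B θ' with hv
  have hrw : (-a) • u - (-b) • v = -(a • u - b • v) := by
    simp [neg_smul]; abel
  rw [hrw, norm_neg]
  have hid : a • u - b • v = a • (u - v) + (a - b) • v := by
    module
  rw [hid]
  have haabs : |a| ≤ 1 := by
    rcases logistic_bounds (fy' θ ν - fy θ ν) with ⟨h1, h2⟩
    rw [abs_le]; constructor <;> [linarith; exact h2]
  have huv : ‖u - v‖ ≤ 2 * L * ‖θ - θ'‖ := by
    have h3 : u - v = (A θ - A θ') - (B θ - B θ') := by rw [hu, hv]; abel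
    rw [h3]
    calc ‖(A θ - A θ') - (B θ - B θ')‖ ≤ ‖A θ - A θ'‖ + ‖B θ - B θ'‖ := norm_sub_le _ _
      _ ≤ L * ‖θ - θ'‖ + L * ‖θ - θ'‖ := add_le_add (hLfy ν θ θ') (hLfy' ν θ θ')
      _ = 2 * L * ‖θ - θ'‖ := by ring
  have hab : |a - b| ≤ (M / 2) * ‖θ - θ'‖ := by
    calc |a - b| ≤ (1/4) * |(fy' θ ν - fy θ ν) - (fy' θ' ν - fy θ' ν)| := logistic_lip _ _
      _ ≤ (1/4) * (|fy' θ ν - fy' θ' ν| + |fy θ ν - fy θ' ν|) := by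
          have := abs_sub (fy' θ ν - fy' θ' ν) (fy θ ν - fy θ' ν)
          have h4 : (fy' θ ν - fy θ ν) - (fy' θ' ν - fy θ' ν)
              = (fy' θ ν - fy' θ' ν) - (fy θ ν - fy θ' ν) := by ring
          rw [h4]
          nlinarith [abs_sub (fy' θ ν - fy' θ' ν) (fy θ ν - fy θ' ν)]
      _ ≤ (1/4) * (M * ‖θ - θ'‖ + M * ‖θ - θ'‖) := by
          have := hMfy ν θ θ'
          have := hMfy' ν θ θ'
          linarith
      _ = (M / 2) * ‖θ - θ'‖ := by ring
  have hvb : ‖v‖ ≤ 2 * M := by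
    calc ‖v‖ ≤ ‖A θ'‖ + ‖B θ'‖ := norm_sub_le _ _
      _ ≤ M + M := add_le_add
          (norm_gradient_le (hdfy ν) hM0 (hMfy ν) θ')
          (norm_gradient_le (hdfy' ν) hM0 (hMfy' ν) θ')
      _ = 2 * M := by ring
  calc ‖a • (u - v) + (a - b) • v‖ ≤ ‖a • (u - v)‖ + ‖(a - b) • v‖ := norm_add_le _ _
    _ = |a| * ‖u - v‖ + |a - b| * ‖v‖ := by rw [norm_smul, norm_smul]; simp [Real.norm_eq_abs]
    _ ≤ (2 * L + M ^ 2) * ‖θ - θ'‖ := by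
        nlinarith [abs_nonneg a, abs_nonneg (a - b), norm_nonneg (u - v), norm_nonneg v,
          mul_le_mul haabs huv (norm_nonneg _) zero_le_one,
          mul_le_mul hab hvb (by positivity : (0:ℝ) ≤ ‖v‖) (by positivity : (0:ℝ) ≤ (M/2) * ‖θ - θ'‖)]
end
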